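/- arXiv:1612.08154 — 2 statements merged into one kernel-verified Lean document; each statement's English description precedes it below -/
import Mathlib

section
/- Let Q be a complete deterministic automaton, and let (x,y) be the normalization of some pair (u,v) ∈ Σ* × Σ⁺ with respect to Q. Then for every i ≥ 0, j ≥ 1 and every factorization y = y'·y'', the pair (x·y^i·y', (y''·y')^j) is the normalization of itself with respect to Q. -/
open Classical

/-- `wpow v n` is the word `v` repeated `n` times. -/
def wpow {α : Type} (v : List α) : ℕ → List α
  | 0 => []
  | n + 1 => wpow v n ++ v

/-- The ultimately periodic infinite word `u·v^ω` (meaningful when `v ≠ []`). -/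
def upWord {α : Type} [Inhabited α] (u v : List α) : ℕ → α := fun n =>
  if n < u.length then u.getD n default
  else v.getD ((n - u.length) % v.length) default

/-- `l` is a prefix of the infinite word `w`. -/
def prefOf {α : Type} [Inhabited α] (l : List α) (w : ℕ → α) : Prop :=
  ∀ i < l.length, w i = l.getD i default

/-- A complete deterministic automaton (no acceptance condition). -/
structure DetAuto (α : Type) : Type 1 where
  State : Type
  [fin : Fintype State]
  init : State
  step : State → α → State

attribute [instance] DetAuto.fin

namespace DetAuto

variable {α : Type}

/-- The state reached from `q` after reading the finite word `w`. -/
def run (A : DetAuto α) (q : A.State) (w : List α) : A.State := w.foldl A.step q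

/-- The state reached from the initial state after reading `w`. -/
def eval (A : DetAuto α) (w : List α) : A.State := A.run A.init w

/-- The (infinite) run of `A` on an infinite word `w`. -/
def runSeq (A : DetAuto α) (w : ℕ → α) : ℕ → A.State
  | 0 => A.init
  | n + 1 => A.step (A.runSeq w n) (w n)

lemma exists_rep (A : DetAuto α) (u v : List α) :
    ∃ i, ∃ j, 1 ≤ j ∧ A.eval (u ++ wpow v i) = A.eval (u ++ wpow v (i + j)) := by
  obtain ⟨a, b, hab, hfab⟩ :=
    Finite.exists_ne_map_eq_of_infinite (fun n : ℕ => A.eval (u ++ wpow v n))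
  rcases lt_or_gt_of_ne hab with h | h
  · exact ⟨a, b - a, by omega, by rw [Nat.add_sub_cancel' h.le]; exact hfab⟩
  · exact ⟨b, a - b, by omega, by rw [Nat.add_sub_cancel' h.le]; exact hfab.symm⟩

/-- The least `i` in the normalization of `(u,v)` w.r.t. `A`. -/
noncomputable def normI (A : DetAuto α) (u v : List α) : ℕ :=
  Nat.find (A.exists_rep u v)

lemma normI_spec (A : DetAuto α) (u v : List α) :
    ∃ j, 1 ≤ j ∧ A.eval (u ++ wpow v (A.normI u v))
      = A.eval (u ++ wpow v (A.normI u v + j)) :=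
  Nat.find_spec (A.exists_rep u v)

/-- The least `j` in the normalization of `(u,v)` w.r.t. `A`. -/
noncomputable def normJ (A : DetAuto α) (u v : List α) : ℕ :=
  Nat.find (A.normI_spec u v)

/-- The normalization `(x, y) = (u·v^i, v^j)` of `(u,v)` w.r.t. `A`. -/
noncomputable def normalize (A : DetAuto α) (u v : List α) : List α × List α :=
  (u ++ wpow v (A.normI u v), wpow v (A.normJ u v))

/-- The product automaton. -/
def prod (A B : DetAuto α) : DetAuto α where
  State := A.State × B.State
  init := (A.init, B.init)
  step := fun p σ => (A.step p.1 σ, B.step p.2 σ)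

end DetAuto

/-- A family of DFAs: a leading automaton and a progress DFA for each of its states. -/
structure FDFA (α : Type) : Type 1 where
  leading : DetAuto α
  pState : leading.State → Type
  [pFin : ∀ q, Fintype (pState q)]
  pInit : ∀ q, pState q
  pStep : ∀ q, pState q → α → pState q
  pAcc : ∀ q, Set (pState q)

attribute [instance] FDFA.pFin

namespace FDFA

variable {α : Type}

/-- The progress DFA at state `q` accepts the finite word `y`. -/
def progAccept (F : FDFA α) (q : F.leading.State) (y : List α) : Prop :=
  y.foldl (F.pStep q) (F.pInit q) ∈ F.pAcc q

/-- `F` accepts the pair `(u, v)`: with `(x,y)` the normalization of `(u,v)` w.r.t.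
the leading automaton, the progress DFA at the state reached on `x` accepts `y`. -/
noncomputable def Accept (F : FDFA α) (u v : List α) : Prop :=
  F.progAccept (F.leading.eval (F.leading.normalize u v).1) (F.leading.normalize u v).2

/-- `F` is saturated: acceptance of `(u,v)` depends only on the infinite word `u·v^ω`. -/
def Saturated [Inhabited α] (F : FDFA α) : Prop :=
  ∀ u v u' v' : List α, v ≠ [] → v' ≠ [] → upWord u v = upWord u' v' →
    (F.Accept u v ↔ F.Accept u' v')

/-- The complement FDFA: same structure, complemented accepting states. -/
def compl (F : FDFA α) : FDFA α :=
  { F with pAcc := fun q => (F.pAcc q)ᶜ }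

end FDFA

lemma wpow_add {α : Type} (v : List α) (m n : ℕ) :
    wpow v (m + n) = wpow v m ++ wpow v n := by
  induction n with
  | zero => simp [wpow]
  | succ n ih =>
    rw [← Nat.add_assoc]
    show wpow v (m + n) ++ v = _
    rw [ih, List.append_assoc]
    rfl

lemma wpow_wpow {α : Type} (v : List α) (a b : ℕ) :
    wpow (wpow v a) b = wpow v (a * b) := by
  induction b with
  | zero => simp [wpow]
  | succ b ih =>
    show wpow (wpow v a) b ++ wpow v a = _
    rw [ih, ← wpow_add, Nat.mul_succ]

lemma wpow_shift {α : Type} (l m : List α) (n : ℕ) :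
    l ++ wpow (m ++ l) n = wpow (l ++ m) n ++ l := by
  induction n with
  | zero => simp [wpow]
  | succ n ih =>
    show l ++ (wpow (m ++ l) n ++ (m ++ l)) = (wpow (l ++ m) n ++ (l ++ m)) ++ l
    rw [← List.append_assoc, ih]
    simp [List.append_assoc]

lemma eval_append {α : Type} (Q : DetAuto α) (a b : List α) :
    Q.eval (a ++ b) = Q.run (Q.eval a) b := by
  simp [DetAuto.eval, DetAuto.run, List.foldl_append]

/-- If `(x,y)` is the normalization of `(u,v)` w.r.t. `Q`, then for every
`i ≥ 0`, `j ≥ 1` and factorization `y = y'·y''`, the pair `(x·y^i·y', (y''·y')^j)` is the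
normalization of itself w.r.t. `Q`. -/
theorem normalization_shift {α : Type} (Q : DetAuto α) (u v x y : List α) (hv : v ≠ [])
    (hxy : Q.normalize u v = (x, y)) :
    ∀ i j : ℕ, 1 ≤ j → ∀ y' y'' : List α, y = y' ++ y'' →
      Q.normalize (x ++ wpow y i ++ y') (wpow (y'' ++ y') j)
        = (x ++ wpow y i ++ y', wpow (y'' ++ y') j) := by
  intro i j hj y' y'' hy
  have hx : x = u ++ wpow v (Q.normI u v) := by
    have := congrArg Prod.fst hxy
    simpa [DetAuto.normalize] using this.symm
  have hyv : y = wpow v (Q.normJ u v) := by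
    have := congrArg Prod.snd hxy
    simpa [DetAuto.normalize] using this.symm
  have hfix : Q.eval x = Q.eval (x ++ y) := by
    have h : Q.eval (u ++ wpow v (Q.normI u v))
        = Q.eval (u ++ wpow v (Q.normI u v + Q.normJ u v)) :=
      (Nat.find_spec (Q.normI_spec u v)).2
    rw [hx, hyv, h, wpow_add, ← List.append_assoc]
  have key : ∀ k, Q.eval (x ++ wpow y k) = Q.eval x := by
    intro k
    induction k with
    | zero => simp [wpow]
    | succ k ih =>
      show Q.eval (x ++ (wpow y k ++ y)) = Q.eval x
      rw [← List.append_assoc, eval_append, ih, ← eval_append, ← hfix]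
  set z := x ++ wpow y i ++ y' with hz
  set W := wpow (y'' ++ y') j with hW
  have zeval : ∀ k, Q.eval (z ++ wpow W k) = Q.run (Q.eval x) y' := by
    intro k
    have hrw : z ++ wpow W k = (x ++ wpow y (i + j * k)) ++ y' := by
      rw [hz, hW, wpow_wpow, List.append_assoc, List.append_assoc, wpow_shift,
        ← hy, wpow_add, ← List.append_assoc, ← List.append_assoc]
      simp [List.append_assoc]
    rw [hrw, eval_append, key]
  have hzW : ∀ k, Q.eval (z ++ wpow W k) = Q.eval z := by
    intro k
    have h0 := zeval 0
    have : z ++ wpow W 0 = z := by simp [wpow]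
    rw [this] at h0
    rw [zeval k, h0]
  have hI : Q.normI z W = 0 := by
    rw [DetAuto.normI, Nat.find_eq_zero]
    exact ⟨1, le_refl 1, by rw [hzW 0, hzW (0 + 1)]⟩
  have hJ : Q.normJ z W = 1 := by
    apply le_antisymm
    · exact Nat.find_le ⟨le_refl 1, by rw [hzW, hzW]⟩
    · exact (Nat.find_spec (Q.normI_spec z W)).1
  show Q.normalize z W = (z, W)
  rw [DetAuto.normalize, hI, hJ]
  simp [wpow]
end

section
/- For a deterministic parity automaton D with coloring κ, and a state q with δ(q, y) = q for a nonempty word y, the progress-DFA computation from (q, κ(q)) on y ends in a state (q, m) where m is the minimum color of the states visited along the cycle from q reading y (including q itself via κ(q)); moreover the run of D on x·y^ω (where D reaches q on x) is accepting iff m is odd. -/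
open Classical

/-- Parity acceptance: the minimal color visited infinitely often along the run is odd. -/
def parityAccepts {α : Type} (A : DetAuto α) (κ : A.State → ℕ) (w : ℕ → α) : Prop :=
  Odd (sInf {c | {n | κ (A.runSeq w n) = c}.Infinite})

section Aux

variable {α : Type}

lemma run_append (A : DetAuto α) (p : A.State) (l₁ l₂ : List α) :
    A.run p (l₁ ++ l₂) = A.run (A.run p l₁) l₂ :=
  List.foldl_append

lemma fold_min_aux (A : DetAuto α) (κ : A.State → ℕ) :
    ∀ (y : List α) (p : A.State) (c : ℕ),
      y.foldl (fun p σ => (A.step p.1 σ, min p.2 (κ (A.step p.1 σ)))) (p, c)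
        = (A.run p y,
           (List.range y.length).foldl (fun m i => min m (κ (A.run p (y.take (i + 1))))) c)
  | [], p, c => rfl
  | a :: t, p, c => by
    simp only [List.foldl_cons]
    rw [fold_min_aux A κ t (A.step p a) (min c (κ (A.step p a)))]
    refine Prod.ext rfl ?_
    · dsimp only [List.length_cons]
      rw [List.range_succ_eq_map, List.foldl_cons, List.foldl_map]
      simp only [List.take_succ_cons]
      congr 1 <;>
        first
          | (funext m i; simp [DetAuto.run])
          | simp [DetAuto.run]

lemma foldl_min_eq_inf' (g : ℕ → ℕ) (c : ℕ) :
    ∀ n : ℕ, (List.range n).foldl (fun m i => min m (g i)) c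
      = (Finset.range (n + 1)).inf' ⟨0, Finset.mem_range.mpr (Nat.succ_pos _)⟩
          (fun i => if i = 0 then c else g (i - 1))
  | 0 => by simp
  | n + 1 => by
    rw [List.range_succ, List.foldl_append, List.foldl_cons, List.foldl_nil,
      foldl_min_eq_inf' g c n]
    simp only [Finset.range_add_one (n := n + 1), Finset.inf'_insert]
    simp [min_comm]

lemma runSeq_prefix [Inhabited α] (A : DetAuto α) (w : ℕ → α) :
    ∀ (l : List α) (n : ℕ) (p : A.State), A.runSeq w n = p →
      (∀ i < l.length, w (n + i) = l.getD i default) →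
      A.runSeq w (n + l.length) = A.run p l
  | [], n, p, hp, _ => by simpa [DetAuto.run] using hp
  | a :: t, n, p, hp, hw => by
    have h1 : A.runSeq w (n + 1) = A.step p a := by
      have := hw 0 (by simp)
      simp at this
      simp [DetAuto.runSeq, hp, this]
    have h2 : ∀ i < t.length, w (n + 1 + i) = t.getD i default := by
      intro i hi
      have := hw (i + 1) (by simpa using Nat.succ_lt_succ hi)
      simpa [Nat.add_assoc, Nat.add_comm 1 i] using this
    have := runSeq_prefix A w t (n + 1) (A.step p a) h1 h2
    calc A.runSeq w (n + (a :: t).length) = A.runSeq w (n + 1 + t.length) := by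
          congr 1; simp; omega
      _ = A.run (A.step p a) t := this
      _ = A.run p (a :: t) := rfl

end Aux

/-- If `δ(q,y) = q` (nonempty `y`) and `A(x) = q`, then the min-color
tracking (progress-DFA) computation from `(q, κ q)` on `y` ends at `(q, m)`, where `m`
is the minimum color on the `q`-cycle over `y` (including `q`); moreover the run of `A`
on `x·y^ω` is parity-accepting iff `m` is odd. -/
theorem progress_cycle_min_color {α : Type} [Inhabited α] (A : DetAuto α)
    (κ : A.State → ℕ) (q : A.State) (x y : List α) (hy : y ≠ [])
    (hx : A.eval x = q) (hloop : A.run q y = q) :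
    y.foldl (fun p σ => (A.step p.1 σ, min p.2 (κ (A.step p.1 σ)))) (q, κ q)
      = (q, (Finset.range (y.length + 1)).inf'
          ⟨0, Finset.mem_range.mpr (Nat.succ_pos _)⟩
          (fun i => κ (A.run q (y.take i)))) ∧
    (parityAccepts A κ (upWord x y) ↔
      Odd ((Finset.range (y.length + 1)).inf'
        ⟨0, Finset.mem_range.mpr (Nat.succ_pos _)⟩
        (fun i => κ (A.run q (y.take i))))) := by
  have hL : 0 < y.length := List.length_pos_iff.mpr hy
  set f : ℕ → ℕ := fun i => κ (A.run q (y.take i)) with hf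
  set m : ℕ := (Finset.range (y.length + 1)).inf'
      ⟨0, Finset.mem_range.mpr (Nat.succ_pos _)⟩ f with hm
  have hf0 : f 0 = κ q := by simp [hf, DetAuto.run]
  have hfL : f y.length = κ q := by simp [hf, List.take_length, hloop]
  -- Part 1
  have part1 : y.foldl (fun p σ => (A.step p.1 σ, min p.2 (κ (A.step p.1 σ)))) (q, κ q)
      = (q, m) := by
    rw [fold_min_aux A κ y q (κ q), hloop]
    congr 1
    rw [foldl_min_eq_inf' (fun i => κ (A.run q (y.take (i + 1)))) (κ q) y.length]
    apply Finset.inf'_congr _ rfl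
    intro i _
    rcases i with _ | j
    · simpa using hf0.symm
    · simp [hf]
  -- the infinite run
  set w : ℕ → α := upWord x y with hw
  have hbase : A.runSeq w x.length = q := by
    have h := runSeq_prefix A w x 0 A.init rfl ?_
    · simpa using h.trans hx
    · intro i hi
      simp [hw, upWord, hi]
  have hper : ∀ k, A.runSeq w (x.length + k) = A.run q (y.take (k % y.length)) := by
    intro k
    induction k with
    | zero => simpa [DetAuto.run] using hbase
    | succ k ih =>
      have hstep : A.runSeq w (x.length + (k + 1))
          = A.step (A.runSeq w (x.length + k)) (w (x.length + k)) := by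
        rw [show x.length + (k + 1) = (x.length + k) + 1 from rfl]
        rfl
      have hwk : w (x.length + k) = y.getD (k % y.length) default := by
        simp [hw, upWord]
      set r := k % y.length with hr
      have hrlt : r < y.length := Nat.mod_lt _ hL
      have htake : y.take (r + 1) = y.take r ++ [y.getD r default] := by
        rw [List.take_succ]
        congr 1
        rw [List.getElem?_eq_getElem hrlt]
        simp [List.getD_eq_getElem?_getD, List.getElem?_eq_getElem hrlt]
      have hrun : A.run q (y.take (r + 1))
          = A.step (A.run q (y.take r)) (y.getD r default) := by
        rw [htake, run_append]; rfl
      rw [hstep, ih, hwk, ← hrun]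
      have hmod : (k + 1) % y.length = (r + 1) % y.length := by
        conv_lhs => rw [← Nat.mod_add_div k y.length, ← hr]
        rw [Nat.add_right_comm, Nat.add_mul_mod_self_left]
      rcases eq_or_lt_of_le (Nat.succ_le_of_lt hrlt) with he | hlt
      · have he' : r + 1 = y.length := he
        have h0 : (k + 1) % y.length = 0 := by rw [hmod, he', Nat.mod_self]
        rw [h0]
        have hty : y.take (r + 1) = y := by rw [he', List.take_length]
        rw [hty]
        simp only [List.take_zero]
        exact hloop
      · have : (k + 1) % y.length = r + 1 := by
          rw [hmod, Nat.mod_eq_of_lt hlt]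
        rw [this]
  -- the set of colors seen infinitely often
  set S : Set ℕ := {c | {n | κ (A.runSeq w n) = c}.Infinite} with hSdef
  have hS : S = {c | ∃ r < y.length, κ (A.run q (y.take r)) = c} := by
    ext c
    constructor
    · intro hc
      obtain ⟨n, hn, hgt⟩ := Set.Infinite.exists_gt hc x.length
      have hn' : n = x.length + (n - x.length) := by omega
      refine ⟨(n - x.length) % y.length, Nat.mod_lt _ hL, ?_⟩
      have := hper (n - x.length)
      rw [← this, ← hn']
      exact hn
    · rintro ⟨r, hrlt, rfl⟩
      apply Set.infinite_of_injective_forall_mem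
        (f := fun k : ℕ => x.length + (r + k * y.length))
      · intro a b hab
        simp only at hab
        have : a * y.length = b * y.length := by omega
        exact Nat.eq_of_mul_eq_mul_right hL this
      · intro k
        have := hper (r + k * y.length)
        simp only [Set.mem_setOf_eq, this]
        rw [Nat.add_mul_mod_self_right, Nat.mod_eq_of_lt hrlt]
  -- sInf S = m
  have hmem : m ∈ S := by
    obtain ⟨i, hi, him⟩ := Finset.exists_mem_eq_inf' (s := Finset.range (y.length + 1))
      ⟨0, Finset.mem_range.mpr (Nat.succ_pos _)⟩ f
    rw [hS]
    rcases lt_or_eq_of_le (Nat.lt_succ_iff.mp (Finset.mem_range.mp hi)) with hlt | heq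
    · exact ⟨i, hlt, by rw [hm, him]⟩
    · refine ⟨0, hL, ?_⟩
      have h1 : m = κ q := by rw [hm, him, heq, hfL]
      have h2 : κ (A.run q (y.take 0)) = κ q := by simp [DetAuto.run]
      rw [h2, h1]
  have hle : ∀ c ∈ S, m ≤ c := by
    intro c hc
    rw [hS] at hc
    obtain ⟨r, hrlt, rfl⟩ := hc
    exact Finset.inf'_le f (Finset.mem_range.mpr (Nat.lt_succ_of_lt hrlt))
  have hsinf : sInf S = m :=
    le_antisymm (Nat.sInf_le hmem) (hle _ (Nat.sInf_mem ⟨m, hmem⟩))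
  exact ⟨part1, by rw [parityAccepts, ← hSdef, hsinf]⟩
end
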